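/- Let X be a complex Banach space and θ_N : X → the N-fold projective tensor product of X given by θ_N(x) = x⊗⋯⊗x. Then for every x ∈ X with x ≠ 0, θ_N^{-1}(θ_N(x)) = { e^{2πik/N}·x : k ∈ ℤ }, i.e., θ_N is N-to-one on nonzero vectors. -/

import Mathlib

open Filter Topology Complex

/-- The diagonal map `θ_N : x ↦ x ⊗ ⋯ ⊗ x` into the `N`-fold (projective) tensor product
is `N`-to-one on nonzero vectors: the preimage of `θ_N x` is exactly
`{ e^{2πik/N} • x : k ∈ ℤ }`. -/
theorem theta_preimage_eq_roots_of_unity_orbit {X : Type*} [NormedAddCommGroup X]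
    [NormedSpace ℂ X] [CompleteSpace X]
    (N : ℕ) (hN : 0 < N) (x : X) (hx : x ≠ 0) :
    {y : X | (PiTensorProduct.tprod ℂ (fun _ : Fin N => y)) =
        (PiTensorProduct.tprod ℂ (fun _ : Fin N => x))} =
      {y : X | ∃ k : ℤ, y = Complex.exp (2 * Real.pi * Complex.I * k / N) • x} := by
  have hNC : (N : ℂ) ≠ 0 := Nat.cast_ne_zero.mpr hN.ne'
  ext y
  simp only [Set.mem_setOf_eq]
  constructor
  · intro h
    obtain ⟨n, rfl⟩ : ∃ n, N = n + 1 := ⟨N - 1, (Nat.succ_pred_eq_of_pos hN).symm⟩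
    have key : ∀ f : Fin (n + 1) → (X →ₗ[ℂ] ℂ),
        (∏ i, f i y) = ∏ i, f i x := by
      intro f
      have := congrArg
        (PiTensorProduct.lift ((MultilinearMap.mkPiAlgebra ℂ (Fin (n + 1)) ℂ).compLinearMap f)) h
      simpa [PiTensorProduct.lift.tprod] using this
    obtain ⟨f₀, _, hf₀x⟩ := exists_dual_vector ℂ x (norm_ne_zero_iff.mpr hx)
    set a : ℂ := f₀ x with ha
    set b : ℂ := f₀ y with hb
    have ha0 : a ≠ 0 := by
      rw [hf₀x]
      exact Complex.ofReal_ne_zero.mpr (norm_ne_zero_iff.mpr hx)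
    have hpow : b ^ (n + 1) = a ^ (n + 1) := by
      have := key (fun _ => (f₀ : X →ₗ[ℂ] ℂ))
      simpa [Finset.prod_const, Finset.card_univ] using this
    have hb0 : b ≠ 0 := by
      intro h0
      exact pow_ne_zero (n + 1) ha0 (by rw [← hpow, h0, zero_pow (Nat.succ_ne_zero n)])
    set c : ℂ := b / a with hc
    have hc1 : c ^ (n + 1) = 1 := by
      rw [hc, div_pow, hpow, div_self (pow_ne_zero _ ha0)]
    have hg : ∀ g : X →L[ℂ] ℂ, g y = c * g x := by
      intro g
      have h1 : g y * b ^ n = g x * a ^ n := by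
        have := key (Fin.cons (g : X →ₗ[ℂ] ℂ) (fun _ => (f₀ : X →ₗ[ℂ] ℂ)))
        simpa [Fin.prod_univ_succ, Finset.prod_const, Finset.card_univ] using this
      have h2 : g y * a = g x * b := by
        apply mul_left_cancel₀ (pow_ne_zero n ha0)
        calc a ^ n * (g y * a) = g y * a ^ (n + 1) := by ring
          _ = g y * b ^ (n + 1) := by rw [hpow]
          _ = g y * b ^ n * b := by ring
          _ = g x * a ^ n * b := by rw [h1]
          _ = a ^ n * (g x * b) := by ring
      rw [hc]
      field_simp
      linear_combination h2
    have hyx : y = c • x := by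
      have hz : y - c • x = 0 := by
        apply NormedSpace.eq_zero_of_forall_dual_eq_zero ℂ
        intro g
        simp [map_sub, map_smul, hg g, smul_eq_mul, mul_comm]
      exact sub_eq_zero.mp hz
    obtain ⟨k, -, hζ⟩ := (Complex.isPrimitiveRoot_exp (n + 1) (Nat.succ_ne_zero n)).eq_pow_of_pow_eq_one hc1
    refine ⟨(k : ℤ), ?_⟩
    have : Complex.exp (2 * Real.pi * Complex.I * ((k : ℤ) : ℂ) / (n + 1 : ℕ)) = c := by
      rw [← hζ, ← Complex.exp_nat_mul]
      congr 1
      push_cast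
      ring
    rw [this]
    exact hyx
  · rintro ⟨k, rfl⟩
    set c : ℂ := Complex.exp (2 * Real.pi * Complex.I * k / N) with hc
    have hcN : c ^ N = 1 := by
      rw [hc, ← Complex.exp_nat_mul]
      have : (N : ℂ) * (2 * Real.pi * Complex.I * k / N) = k * (2 * Real.pi * Complex.I) := by
        field_simp
      rw [this, Complex.exp_int_mul_two_pi_mul_I]
    calc PiTensorProduct.tprod ℂ (fun _ : Fin N => c • x)
        = (∏ _ : Fin N, c) • PiTensorProduct.tprod ℂ (fun _ : Fin N => x) :=
          (PiTensorProduct.tprod ℂ).map_smul_univ (fun _ => c) (fun _ => x)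
      _ = PiTensorProduct.tprod ℂ (fun _ : Fin N => x) := by
          simp [Finset.prod_const, Finset.card_univ, hcN]
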